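/- For every odd integer n ≥ 5 there exists a 3-graph H on n vertices with minimum vertex degree δ1(H) ≥ ((n−1)/2)·⌊d⋆(n)⌋ such that some vertex of H is not contained in any copy of K4^{(3)−}; consequently c1(n, K4^{(3)−}) ≥ ((n−1)/2)·⌊d⋆(n)⌋. -/
import Mathlib


open Finset

/-- The degree of a vertex in a hypergraph: the number of edges containing it. -/
def hdeg {V : Type*} [DecidableEq V] (G : Finset (Finset V)) (x : V) : ℕ :=
  (G.filter (fun e => x ∈ e)).card

/-- The minimum vertex degree of a hypergraph. -/
noncomputable def minDeg {V : Type*} [DecidableEq V] (G : Finset (Finset V)) : ℕ :=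
  sInf (Set.range (hdeg G))

/-- Vertex `x` is covered by a copy of `K₄⁽³⁾⁻` in the 3-graph `H`. -/
def CovK4m {V : Type*} [DecidableEq V] (H : Finset (Finset V)) (x : V) : Prop :=
  ∃ a b c d : V, a ≠ b ∧ a ≠ c ∧ a ≠ d ∧ b ≠ c ∧ b ≠ d ∧ c ≠ d ∧
    (x = a ∨ x = b ∨ x = c ∨ x = d) ∧
    ({a, b, c} : Finset V) ∈ H ∧ ({a, b, d} : Finset V) ∈ H ∧ ({a, c, d} : Finset V) ∈ H

/-- `c₁(n, K₄⁽³⁾⁻)`: the maximum of `δ₁(G)` over `n`-vertex 3-graphs `G` having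
no `K₄⁽³⁾⁻`-covering. -/
noncomputable def c1K4m (n : ℕ) : ℕ :=
  sSup {d : ℕ | ∃ H : Finset (Finset (Fin n)),
    (∀ e ∈ H, e.card = 3) ∧ (∃ x, ¬ CovK4m H x) ∧ d = minDeg H}

/-- `d⋆(n) = (√(13n² − 72n + 108) − n + 6)/6`. -/
noncomputable def dstar (n : ℕ) : ℝ :=
  (Real.sqrt (13 * (n : ℝ) ^ 2 - 72 * n + 108) - n + 6) / 6

section Construction
variable {n m d : ℕ}

def inP (n m : ℕ) (v : Fin n) : Prop := 1 ≤ v.val ∧ v.val ≤ m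
def inQ (n m : ℕ) (v : Fin n) : Prop := m + 1 ≤ v.val ∧ v.val ≤ 2*m

instance : DecidablePred (inP n m) := fun _ => inferInstanceAs (Decidable (_ ∧ _))
instance : DecidablePred (inQ n m) := fun _ => inferInstanceAs (Decidable (_ ∧ _))

def rel' (n m d : ℕ) (a b : Fin n) : Prop := inP n m a ∧ inQ n m b ∧ (a.val + b.val) % m < d

instance : ∀ a b, Decidable (rel' n m d a b) := fun _ _ => inferInstanceAs (Decidable (_ ∧ _ ∧ _))

def Ladj (n m d : ℕ) (a b : Fin n) : Prop := rel' n m d a b ∨ rel' n m d b a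

instance : ∀ a b, Decidable (Ladj n m d a b) := fun _ _ => inferInstanceAs (Decidable (_ ∨ _))

def cherryFree (n m d : ℕ) (e : Finset (Fin n)) : Prop :=
  ∀ a ∈ e, ∀ b ∈ e, ∀ c ∈ e, b ≠ c → ¬(Ladj n m d a b ∧ Ladj n m d a c)

instance : DecidablePred (cherryFree n m d) := fun e =>
  inferInstanceAs (Decidable (∀ a ∈ e, ∀ b ∈ e, ∀ c ∈ e, b ≠ c → ¬(Ladj n m d a b ∧ Ladj n m d a c)))

def HH (n m d : ℕ) [NeZero n] : Finset (Finset (Fin n)) :=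
  ((Finset.univ ×ˢ Finset.univ).filter (fun ab : Fin n × Fin n => rel' n m d ab.1 ab.2)).image
    (fun ab => {0, ab.1, ab.2}) ∪
  ((Finset.univ.powersetCard 3).filter (fun e => (0 : Fin n) ∉ e ∧ cherryFree n m d e))

lemma Ladj_symm {a b : Fin n} (h : Ladj n m d a b) : Ladj n m d b a := h.symm

lemma Ladj_sides {a b : Fin n} (h : Ladj n m d a b) :
    (inP n m a ∧ inQ n m b) ∨ (inQ n m a ∧ inP n m b) := by
  rcases h with ⟨h1, h2, _⟩ | ⟨h1, h2, _⟩
  · exact Or.inl ⟨h1, h2⟩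
  · exact Or.inr ⟨h2, h1⟩

lemma Ladj_ne {a b : Fin n} (h : Ladj n m d a b) : a ≠ b := by
  rcases Ladj_sides h with ⟨⟨h1, h2⟩, ⟨h3, h4⟩⟩ | ⟨⟨h1, h2⟩, ⟨h3, h4⟩⟩ <;>
    (intro hab; rw [hab] at h2; omega)

lemma Ladj_zero [NeZero n] {b : Fin n} (h : Ladj n m d 0 b) : False := by
  have h0 : (0 : Fin n).val = 0 := rfl
  rcases Ladj_sides h with ⟨⟨h1, h2⟩, _⟩ | ⟨⟨h1, h2⟩, _⟩ <;> omega

lemma ne_zero_side [NeZero n] (hn : n = 2*m+1) {v : Fin n} (hv : v ≠ 0) : inP n m v ∨ inQ n m v := by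
  have h1 : v.val < n := v.isLt
  have h0 : v.val ≠ 0 := by
    intro h; apply hv; exact Fin.ext (by simp [h])
  unfold inP inQ; omega

lemma mem_HH_zero [NeZero n] {e : Finset (Fin n)} (he : e ∈ HH n m d) (h0 : (0:Fin n) ∈ e) :
    ∃ a b, rel' n m d a b ∧ e = {0, a, b} := by
  rcases Finset.mem_union.1 he with h | h
  · obtain ⟨ab, hab, rfl⟩ := Finset.mem_image.1 h
    exact ⟨ab.1, ab.2, (Finset.mem_filter.1 hab).2, rfl⟩
  · exact absurd h0 (Finset.mem_filter.1 h).2.1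

lemma mem_HH_nzero [NeZero n] {e : Finset (Fin n)} (he : e ∈ HH n m d) (h0 : (0:Fin n) ∉ e) :
    e.card = 3 ∧ cherryFree n m d e := by
  rcases Finset.mem_union.1 he with h | h
  · obtain ⟨ab, _, rfl⟩ := Finset.mem_image.1 h
    exact absurd (Finset.mem_insert_self _ _) h0
  · obtain ⟨h1, _, h3⟩ := Finset.mem_filter.1 h
    exact ⟨(Finset.mem_powersetCard.1 h1).2, h3⟩

lemma rel'_vals {a b : Fin n} (h : rel' n m d a b) :
    1 ≤ a.val ∧ a.val ≤ m ∧ m + 1 ≤ b.val ∧ b.val ≤ 2*m := ⟨h.1.1, h.1.2, h.2.1.1, h.2.1.2⟩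

lemma HH_card3 [NeZero n] {e : Finset (Fin n)} (he : e ∈ HH n m d) : e.card = 3 := by
  rcases Finset.mem_union.1 he with h | h
  · obtain ⟨ab, hab, rfl⟩ := Finset.mem_image.1 h
    obtain ⟨h1, h2, h3, h4⟩ := rel'_vals (Finset.mem_filter.1 hab).2
    refine Finset.card_eq_three.2 ⟨0, ab.1, ab.2, ?_, ?_, ?_, rfl⟩
    · intro h; apply_fun Fin.val at h; simp at h; omega
    · intro h; apply_fun Fin.val at h; simp at h; omega
    · intro h; apply_fun Fin.val at h; omega
  · exact (Finset.mem_powersetCard.1 (Finset.mem_filter.1 h).1).2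

lemma link_pair [NeZero n] {e : Finset (Fin n)} {u v : Fin n} (he : e ∈ HH n m d)
    (h0 : (0:Fin n) ∈ e) (hu : u ∈ e) (hv : v ∈ e) (hu0 : u ≠ 0) (hv0 : v ≠ 0) (huv : u ≠ v) :
    Ladj n m d u v := by
  obtain ⟨a, b, hrel, rfl⟩ := mem_HH_zero he h0
  simp only [Finset.mem_insert, Finset.mem_singleton] at hu hv
  rcases hu with rfl | rfl | rfl
  · exact absurd rfl hu0
  · rcases hv with rfl | rfl | rfl
    · exact absurd rfl hv0
    · exact absurd rfl huv
    · exact Or.inl hrel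
  · rcases hv with rfl | rfl | rfl
    · exact absurd rfl hv0
    · exact Or.inr hrel
    · exact absurd rfl huv


lemma mod_inj {m x y : ℕ} (h : x % m = y % m) (h1 : x < y + m) (h2 : y < x + m) : x = y := by
  rcases le_total x y with hle | hle
  · have hd : m ∣ y - x := (Nat.modEq_iff_dvd' hle).1 h
    have := Nat.eq_zero_of_dvd_of_lt hd (by omega)
    omega
  · have hd : m ∣ x - y := (Nat.modEq_iff_dvd' hle).1 h.symm
    have := Nat.eq_zero_of_dvd_of_lt hd (by omega)
    omega

lemma modlem {m t j : ℕ} (hm : 0 < m) (ht : t ≤ 2*m*m) (hj : j < m) :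
    (t + (j + 2*m*m - t) % m) % m = j := by
  rw [Nat.add_mod_mod]
  have he : t + (j + 2*m*m - t) = j + 2*m*m := by omega
  rw [he]
  have h2 : j + 2*m*m = j + m * (2*m) := by ring
  rw [h2, Nat.add_mul_mod_self_left]
  exact Nat.mod_eq_of_lt hj

def Nbr (n m d : ℕ) (u : Fin n) : Finset (Fin n) :=
  Finset.univ.filter (fun w => Ladj n m d u w)

lemma mem_Nbr {u w : Fin n} : w ∈ Nbr n m d u ↔ Ladj n m d u w := by
  simp [Nbr]

lemma card_Nbr (hm1 : 1 ≤ m) (u : Fin n) : (Nbr n m d u).card ≤ d := by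
  by_cases hP : inP n m u
  · have h := Finset.card_le_card_of_injOn (fun w : Fin n => (u.val + w.val) % m)
      (fun w hw => ?_) ?_ (s := Nbr n m d u) (t := Finset.range d)
    · simpa using h
    · rcases mem_Nbr.1 hw with hr | hr
      · exact Finset.mem_range.2 hr.2.2
      · obtain ⟨h1, h2⟩ := hr.2.1; obtain ⟨h3, h4⟩ := hP; omega
    · intro w hw w' hw' hf
      rw [Finset.mem_coe, mem_Nbr] at hw
      rw [Finset.mem_coe, mem_Nbr] at hw'
      have hq : inQ n m w ∧ inQ n m w' := by
        constructor
        · rcases hw with hr | hr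
          · exact hr.2.1
          · obtain ⟨h1, h2⟩ := hr.2.1; obtain ⟨h3, h4⟩ := hP; omega
        · rcases hw' with hr | hr
          · exact hr.2.1
          · obtain ⟨h1, h2⟩ := hr.2.1; obtain ⟨h3, h4⟩ := hP; omega
      obtain ⟨⟨hq1, hq2⟩, hq3, hq4⟩ := hq
      have : u.val + w.val = u.val + w'.val := mod_inj hf (by omega) (by omega)
      exact Fin.ext (by omega)
  · by_cases hQ : inQ n m u
    · have h := Finset.card_le_card_of_injOn (fun w : Fin n => (w.val + u.val) % m)
        (fun w hw => ?_) ?_ (s := Nbr n m d u) (t := Finset.range d)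
      · simpa using h
      · rcases mem_Nbr.1 hw with hr | hr
        · obtain ⟨h1, h2⟩ := hr.1; obtain ⟨h3, h4⟩ := hQ; omega
        · exact Finset.mem_range.2 hr.2.2
      · intro w hw w' hw' hf
        rw [Finset.mem_coe, mem_Nbr] at hw
        rw [Finset.mem_coe, mem_Nbr] at hw'
        have hq : inP n m w ∧ inP n m w' := by
          constructor
          · rcases hw with hr | hr
            · obtain ⟨h1, h2⟩ := hr.1; obtain ⟨h3, h4⟩ := hQ; omega
            · exact hr.1
          · rcases hw' with hr | hr
            · obtain ⟨h1, h2⟩ := hr.1; obtain ⟨h3, h4⟩ := hQ; omega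
            · exact hr.1
        obtain ⟨⟨hq1, hq2⟩, hq3, hq4⟩ := hq
        have : w.val + u.val = w'.val + u.val := mod_inj hf (by omega) (by omega)
        exact Fin.ext (by omega)
    · have : Nbr n m d u = ∅ := by
        rw [Finset.eq_empty_iff_forall_notMem]
        intro w hw
        rcases Ladj_sides (mem_Nbr.1 hw) with ⟨h1, _⟩ | ⟨h1, _⟩
        · exact hP h1
        · exact hQ h1
      simp [this]

lemma mateP (hn : n = 2*m+1) (hm2 : 2 ≤ m) {u : Fin n} {j : ℕ} (hu : inP n m u) (hj : j < d)
    (hdm : d ≤ m) : ∃ b : Fin n, rel' n m d u b ∧ (u.val + b.val) % m = j := by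
  have hm0 : 0 < m := by omega
  have hmm : 2*m + 1 ≤ 2*m*m := by nlinarith
  obtain ⟨hu1, hu2⟩ := hu
  set r := (j + 2*m*m - (u.val + m + 1)) % m with hrdef
  have hrm : r < m := Nat.mod_lt _ hm0
  have hmod : (u.val + m + 1 + r) % m = j := modlem hm0 (by omega) (by omega)
  have he : u.val + (m + 1 + r) = u.val + m + 1 + r := by ring
  refine ⟨⟨m + 1 + r, by omega⟩, ⟨⟨hu1, hu2⟩, ⟨?_, ?_⟩, ?_⟩, ?_⟩
  · show m + 1 ≤ m + 1 + r; omega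
  · show m + 1 + r ≤ 2*m; omega
  · show (u.val + (m + 1 + r)) % m < d
    rw [he, hmod]; exact hj
  · show (u.val + (m + 1 + r)) % m = j
    rw [he, hmod]

lemma mateQ (hn : n = 2*m+1) (hm2 : 2 ≤ m) {u : Fin n} {j : ℕ} (hu : inQ n m u) (hj : j < d)
    (hdm : d ≤ m) : ∃ a : Fin n, rel' n m d a u ∧ (a.val + u.val) % m = j := by
  have hm0 : 0 < m := by omega
  have hmm : 2*m + 2 ≤ 2*m*m := by nlinarith
  obtain ⟨hu1, hu2⟩ := hu
  set r := (j + 2*m*m - (u.val + 1)) % m with hrdef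
  have hrm : r < m := Nat.mod_lt _ hm0
  have hmod : (u.val + 1 + r) % m = j := modlem hm0 (by omega) (by omega)
  have he : (1 + r) + u.val = u.val + 1 + r := by ring
  have hlt : 1 + r < n := by omega
  refine ⟨⟨1 + r, hlt⟩, ⟨⟨?_, ?_⟩, ⟨hu1, hu2⟩, ?_⟩, ?_⟩
  · show 1 ≤ 1 + r; omega
  · show 1 + r ≤ m; omega
  · show ((1 + r) + u.val) % m < d
    rw [he, hmod]; exact hj
  · show ((1 + r) + u.val) % m = j
    rw [he, hmod]

lemma not_cov [NeZero n] (hm1 : 1 ≤ m) : ¬ CovK4m (HH n m d) 0 := by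
  rintro ⟨a, b, c, e, hab, hac, hae, hbc, hbe, hce, hx, h1, h2, h3⟩
  rcases hx with rfl | rfl | rfl | rfl
  · -- x = a = 0
    have l1 : Ladj n m d b c := link_pair h1 (by simp) (by simp) (by simp)
      (Ne.symm hab) (Ne.symm hac) hbc
    have l2 : Ladj n m d b e := link_pair h2 (by simp) (by simp) (by simp)
      (Ne.symm hab) (Ne.symm hae) hbe
    have l3 : Ladj n m d c e := link_pair h3 (by simp) (by simp) (by simp)
      (Ne.symm hac) (Ne.symm hae) hce
    rcases Ladj_sides l1 with ⟨⟨p1,p2⟩,q1,q2⟩ | ⟨⟨p1,p2⟩,q1,q2⟩ <;>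
      rcases Ladj_sides l2 with ⟨⟨r1,r2⟩,s1,s2⟩ | ⟨⟨r1,r2⟩,s1,s2⟩ <;>
      rcases Ladj_sides l3 with ⟨⟨t1,t2⟩,u1,u2⟩ | ⟨⟨t1,t2⟩,u1,u2⟩ <;> omega
  · -- x = b = 0
    have l1 : Ladj n m d a c := link_pair h1 (by simp) (by simp) (by simp) hab
      (Ne.symm hbc) hac
    have l2 : Ladj n m d a e := link_pair h2 (by simp) (by simp) (by simp) hab
      (Ne.symm hbe) hae
    have h0 : (0:Fin n) ∉ ({a, c, e} : Finset (Fin n)) := by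
      simp only [Finset.mem_insert, Finset.mem_singleton]
      push_neg
      exact ⟨Ne.symm hab, hbc, hbe⟩
    have := (mem_HH_nzero h3 h0).2
    exact this a (by simp) c (by simp) e (by simp) hce ⟨l1, l2⟩
  · -- x = c = 0
    have l1 : Ladj n m d a b := link_pair h1 (by simp) (by simp) (by simp) hac hbc hab
    have l2 : Ladj n m d a e := link_pair h3 (by simp) (by simp) (by simp) hac
      (Ne.symm hce) hae
    have h0 : (0:Fin n) ∉ ({a, b, e} : Finset (Fin n)) := by
      simp only [Finset.mem_insert, Finset.mem_singleton]
      push_neg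
      exact ⟨Ne.symm hac, Ne.symm hbc, hce⟩
    have := (mem_HH_nzero h2 h0).2
    exact this a (by simp) b (by simp) e (by simp) hbe ⟨l1, l2⟩
  · -- x = e = 0
    have l1 : Ladj n m d a b := link_pair h2 (by simp) (by simp) (by simp) hae hbe hab
    have l2 : Ladj n m d a c := link_pair h3 (by simp) (by simp) (by simp) hae hce hac
    have h0 : (0:Fin n) ∉ ({a, b, c} : Finset (Fin n)) := by
      simp only [Finset.mem_insert, Finset.mem_singleton]
      push_neg
      exact ⟨Ne.symm hae, Ne.symm hbe, Ne.symm hce⟩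
    have := (mem_HH_nzero h1 h0).2
    exact this a (by simp) b (by simp) c (by simp) hbc ⟨l1, l2⟩

lemma deg_zero [NeZero n] (hn : n = 2*m+1) (hm2 : 2 ≤ m) (hdm : d ≤ m) :
    m * d ≤ hdeg (HH n m d) 0 := by
  have hpv : ∀ i : Fin m, i.val + 1 < n := fun i => by have := i.isLt; omega
  have hpi : ∀ i : Fin m, inP n m ⟨i.val + 1, hpv i⟩ := fun i =>
    ⟨by show 1 ≤ i.val + 1; omega, by show i.val + 1 ≤ m; exact i.isLt⟩
  choose bf hbf1 hbf2 using fun (i : Fin m) (j : Fin d) =>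
    mateP (d := d) hn hm2 (hpi i) j.isLt hdm
  have hQv : ∀ i j, m + 1 ≤ (bf i j).val ∧ (bf i j).val ≤ 2*m := fun i j =>
    (hbf1 i j).2.1
  have hcard := Finset.card_le_card_of_injOn
    (fun ij : Fin m × Fin d => ({0, ⟨ij.1.val + 1, hpv ij.1⟩, bf ij.1 ij.2} : Finset (Fin n)))
    (s := Finset.univ) (t := (HH n m d).filter (fun e => (0:Fin n) ∈ e)) ?_ ?_
  · calc m * d = (Finset.univ : Finset (Fin m × Fin d)).card := by simp
    _ ≤ _ := hcard
    _ = hdeg (HH n m d) 0 := rfl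
  · intro ij _
    refine Finset.mem_filter.2 ⟨Finset.mem_union_left _ ?_, by simp⟩
    exact Finset.mem_image.2 ⟨(⟨ij.1.val + 1, hpv ij.1⟩, bf ij.1 ij.2),
      Finset.mem_filter.2 ⟨Finset.mem_product.2 ⟨Finset.mem_univ _, Finset.mem_univ _⟩,
        hbf1 ij.1 ij.2⟩, rfl⟩
  · rintro ⟨i, j⟩ - ⟨i', j'⟩ - h
    simp only at h
    have h0 : (0 : Fin n).val = 0 := rfl
    obtain ⟨hq1, hq2⟩ := hQv i j
    obtain ⟨hq1', hq2'⟩ := hQv i' j'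
    have hia : (⟨i.val + 1, hpv i⟩ : Fin n) ∈ ({0, ⟨i'.val + 1, hpv i'⟩, bf i' j'} : Finset (Fin n)) := by
      rw [← h]; simp
    have hba : bf i j ∈ ({0, ⟨i'.val + 1, hpv i'⟩, bf i' j'} : Finset (Fin n)) := by
      rw [← h]; simp
    simp only [Finset.mem_insert, Finset.mem_singleton] at hia hba
    have hii : i = i' := by
      rcases hia with he | he | he
      · apply_fun Fin.val at he; simp [h0] at he
      · apply_fun Fin.val at he; simp at he; exact Fin.ext he
      · apply_fun Fin.val at he; simp at he; have := i.isLt; have := i'.isLt; omega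
    have hbb : bf i j = bf i' j' := by
      rcases hba with he | he | he
      · apply_fun Fin.val at he; rw [h0] at he; omega
      · apply_fun Fin.val at he; simp at he; omega
      · exact he
    refine Prod.ext hii (Fin.ext ?_)
    have e1 := hbf2 i j
    have e2 := hbf2 i' j'
    have hv1 : (bf i j).val = (bf i' j').val := congrArg Fin.val hbb
    have hv2 : i.val = i'.val := congrArg Fin.val hii
    show j.val = j'.val
    rw [← e1, ← e2]
    show ((i.val + 1) + (bf i j).val) % m = ((i'.val + 1) + (bf i' j').val) % m
    rw [hv1, hv2]

lemma deg_other [NeZero n] (hn : n = 2*m+1) (hm2 : 2 ≤ m) (hd1 : 1 ≤ d) (hdm : d ≤ m)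
    {k : ℕ} (hk : d * (d-1) = 2 * k) (hkey : 3*k + m*d ≤ (2*m-1)*(m-1) + d)
    {u : Fin n} (hu : u ≠ 0) : m * d ≤ hdeg (HH n m d) u := by
  classical
  set A := ((HH n m d).filter (fun e => u ∈ e)).filter (fun e => (0:Fin n) ∈ e) with hA
  set B := ((HH n m d).filter (fun e => u ∈ e)).filter (fun e => ¬ (0:Fin n) ∈ e) with hB
  set T := ((Finset.univ : Finset (Fin n)) \ {0, u}).powersetCard 2 with hT
  set GP := T.filter (fun p => cherryFree n m d (insert u p)) with hGP
  set Bad := T.filter (fun p => ¬ cherryFree n m d (insert u p)) with hBad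
  have f1 : d ≤ A.card := by
    rcases ne_zero_side hn hu with hs | hs
    · choose bf hbf1 hbf2 using fun (j : Fin d) => mateP (d := d) hn hm2 hs j.isLt hdm
      have h := Finset.card_le_card_of_injOn (fun j : Fin d => ({0, u, bf j} : Finset (Fin n)))
        (s := Finset.univ) (t := A) ?_ ?_
      · simpa using h
      · intro j _
        refine Finset.mem_filter.2 ⟨Finset.mem_filter.2 ⟨?_, by simp⟩, by simp⟩
        exact Finset.mem_union_left _ (Finset.mem_image.2 ⟨(u, bf j),
          Finset.mem_filter.2 ⟨Finset.mem_product.2 ⟨Finset.mem_univ _, Finset.mem_univ _⟩,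
            hbf1 j⟩, rfl⟩)
      · intro j _ j' _ h
        simp only at h
        obtain ⟨hq1, hq2⟩ := (hbf1 j).2.1
        obtain ⟨hq1', hq2'⟩ := (hbf1 j').2.1
        obtain ⟨hu1, hu2⟩ := hs
        have hb : bf j ∈ ({0, u, bf j'} : Finset (Fin n)) := by rw [← h]; simp
        simp only [Finset.mem_insert, Finset.mem_singleton] at hb
        have hbb : bf j = bf j' := by
          rcases hb with he | he | he
          · apply_fun Fin.val at he; rw [show ((0:Fin n)).val = 0 from rfl] at he; omega
          · apply_fun Fin.val at he; omega
          · exact he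
        apply Fin.ext
        rw [← hbf2 j, ← hbf2 j', hbb]
    · choose af haf1 haf2 using fun (j : Fin d) => mateQ (d := d) hn hm2 hs j.isLt hdm
      have h := Finset.card_le_card_of_injOn (fun j : Fin d => ({0, af j, u} : Finset (Fin n)))
        (s := Finset.univ) (t := A) ?_ ?_
      · simpa using h
      · intro j _
        refine Finset.mem_filter.2 ⟨Finset.mem_filter.2 ⟨?_, by simp⟩, by simp⟩
        exact Finset.mem_union_left _ (Finset.mem_image.2 ⟨(af j, u),
          Finset.mem_filter.2 ⟨Finset.mem_product.2 ⟨Finset.mem_univ _, Finset.mem_univ _⟩,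
            haf1 j⟩, rfl⟩)
      · intro j _ j' _ h
        simp only at h
        obtain ⟨hq1, hq2⟩ := (haf1 j).1
        obtain ⟨hq1', hq2'⟩ := (haf1 j').1
        obtain ⟨hu1, hu2⟩ := hs
        have hb : af j ∈ ({0, af j', u} : Finset (Fin n)) := by rw [← h]; simp
        simp only [Finset.mem_insert, Finset.mem_singleton] at hb
        have hbb : af j = af j' := by
          rcases hb with he | he | he
          · apply_fun Fin.val at he; rw [show ((0:Fin n)).val = 0 from rfl] at he; omega
          · exact he
          · apply_fun Fin.val at he; omega
        apply Fin.ext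
        rw [← haf2 j, ← haf2 j', hbb]
  have f2 : GP.card ≤ B.card := by
    have hU : ∀ p ∈ GP, u ∉ p ∧ (0:Fin n) ∉ p ∧ p.card = 2 ∧ cherryFree n m d (insert u p) := by
      intro p hp
      obtain ⟨hpT, hcf⟩ := Finset.mem_filter.1 hp
      obtain ⟨hsubp, hcard⟩ := Finset.mem_powersetCard.1 hpT
      refine ⟨fun h => ?_, fun h => ?_, hcard, hcf⟩
      · have := hsubp h; simp at this
      · have := hsubp h; simp at this
    apply Finset.card_le_card_of_injOn (fun p => insert u p)
    · intro p hp
      obtain ⟨hup, h0p, hcard, hcf⟩ := hU p hp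
      have h0i : (0:Fin n) ∉ insert u p := by
        simp only [Finset.mem_insert]; push_neg; exact ⟨Ne.symm hu, h0p⟩
      refine Finset.mem_filter.2 ⟨Finset.mem_filter.2 ⟨?_, Finset.mem_insert_self _ _⟩, h0i⟩
      refine Finset.mem_union_right _ (Finset.mem_filter.2 ⟨?_, h0i, hcf⟩)
      exact Finset.mem_powersetCard.2 ⟨Finset.subset_univ _,
        by rw [Finset.card_insert_of_notMem hup, hcard]⟩
    · intro p hp p' hp' h
      have hup : u ∉ p := (hU p hp).1
      have hup' : u ∉ p' := (hU p' hp').1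
      rw [← Finset.erase_insert hup, ← Finset.erase_insert hup']
      exact congrArg (fun s => Finset.erase s u) h
  have f3 : GP.card + Bad.card = T.card := Finset.card_filter_add_card_filter_not _
  have f4 : Bad.card ≤ 3*k := by
    set Nu := Nbr n m d u with hNu
    set Bad1 := Nu.powersetCard 2 with hBad1
    set S := (Nu ×ˢ (Finset.univ : Finset (Fin n))).filter
        (fun vw => Ladj n m d vw.1 vw.2 ∧ vw.2 ≠ u) with hS
    set Bad2 := S.image (fun vw => ({vw.1, vw.2} : Finset (Fin n))) with hBad2
    have hsub : Bad ⊆ Bad1 ∪ Bad2 := by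
      intro p hp
      obtain ⟨hpT, hnc⟩ := Finset.mem_filter.1 hp
      obtain ⟨hsubp, hcard⟩ := Finset.mem_powersetCard.1 hpT
      obtain ⟨v, w, hvw, rfl⟩ := Finset.card_eq_two.1 hcard
      have hv : v ≠ 0 ∧ v ≠ u := by
        have := hsubp (by simp : v ∈ ({v,w} : Finset (Fin n))); simp at this; tauto
      have hw : w ≠ 0 ∧ w ≠ u := by
        have := hsubp (by simp : w ∈ ({v,w} : Finset (Fin n))); simp at this; tauto
      unfold cherryFree at hnc
      push_neg at hnc
      obtain ⟨a, ha, b, hb, c, hc, hbc, hLab, hLac⟩ := hnc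
      simp only [Finset.mem_insert, Finset.mem_singleton] at ha hb hc
      have hab' : a ≠ b := Ladj_ne hLab
      have hac' : a ≠ c := Ladj_ne hLac
      rcases ha with rfl | rfl | rfl
      · apply Finset.mem_union_left
        refine Finset.mem_powersetCard.2 ⟨?_, hcard⟩
        have hLv : Ladj n m d a v ∧ Ladj n m d a w := by
          rcases hb with rfl|rfl|rfl <;> rcases hc with rfl|rfl|rfl <;> first
            | exact absurd rfl hab' | exact absurd rfl hac' | exact absurd rfl hbc
            | exact ⟨hLab, hLac⟩ | exact ⟨hLac, hLab⟩
        intro z hz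
        simp only [Finset.mem_insert, Finset.mem_singleton] at hz
        rcases hz with rfl|rfl
        exacts [mem_Nbr.2 hLv.1, mem_Nbr.2 hLv.2]
      · apply Finset.mem_union_right
        have hvu : Ladj n m d a u ∧ Ladj n m d a w := by
          rcases hb with rfl|rfl|rfl <;> rcases hc with rfl|rfl|rfl <;> first
            | exact absurd rfl hab' | exact absurd rfl hac' | exact absurd rfl hbc
            | exact ⟨hLab, hLac⟩ | exact ⟨hLac, hLab⟩
        refine Finset.mem_image.2 ⟨(a, w), Finset.mem_filter.2 ⟨Finset.mem_product.2
          ⟨mem_Nbr.2 (Ladj_symm hvu.1), Finset.mem_univ _⟩, hvu.2, hw.2⟩, rfl⟩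
      · apply Finset.mem_union_right
        have hvu : Ladj n m d a u ∧ Ladj n m d a v := by
          rcases hb with rfl|rfl|rfl <;> rcases hc with rfl|rfl|rfl <;> first
            | exact absurd rfl hab' | exact absurd rfl hac' | exact absurd rfl hbc
            | exact ⟨hLab, hLac⟩ | exact ⟨hLac, hLab⟩
        refine Finset.mem_image.2 ⟨(a, v), Finset.mem_filter.2 ⟨Finset.mem_product.2
          ⟨mem_Nbr.2 (Ladj_symm hvu.1), Finset.mem_univ _⟩, hvu.2, hv.2⟩, ?_⟩
        simp only []
        rw [Finset.pair_comm]
    have hc1 : Bad1.card ≤ k := by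
      rw [hBad1, Finset.card_powersetCard]
      calc Nu.card.choose 2 ≤ d.choose 2 := Nat.choose_le_choose 2 (card_Nbr (by omega) u)
      _ = k := by rw [Nat.choose_two_right, hk, Nat.mul_div_cancel_left _ (by norm_num)]
    have hc2 : Bad2.card ≤ 2*k := by
      have h1 : Bad2.card ≤ S.card := Finset.card_image_le
      have h2 : S ⊆ Nu.biUnion (fun v => ((Nbr n m d v).erase u).image (fun w => (v, w))) := by
        rintro ⟨v, w⟩ hvw2
        obtain ⟨hmem, hL, hne⟩ := Finset.mem_filter.1 hvw2
        have hv := (Finset.mem_product.1 hmem).1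
        exact Finset.mem_biUnion.2 ⟨v, hv,
          Finset.mem_image.2 ⟨w, Finset.mem_erase.2 ⟨hne, mem_Nbr.2 hL⟩, rfl⟩⟩
      have h3 : (Nu.biUnion (fun v => ((Nbr n m d v).erase u).image (fun w => (v, w)))).card
          ≤ Nu.card * (d-1) := by
        refine (Finset.card_biUnion_le).trans ?_
        have hb : ∀ v ∈ Nu, (((Nbr n m d v).erase u).image (fun w => (v, w))).card ≤ d - 1 := by
          intro v hv
          refine Finset.card_image_le.trans ?_
          have hu' : u ∈ Nbr n m d v := mem_Nbr.2 (Ladj_symm (mem_Nbr.1 hv))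
          rw [Finset.card_erase_of_mem hu']
          have := card_Nbr (n:=n) (m:=m) (d:=d) (by omega) v
          omega
        simpa using Finset.sum_le_card_nsmul _ _ (d-1) hb
      have h4 : Nu.card * (d-1) ≤ d * (d-1) := Nat.mul_le_mul_right _ (card_Nbr (by omega) u)
      calc Bad2.card ≤ S.card := h1
      _ ≤ _ := Finset.card_le_card h2
      _ ≤ Nu.card * (d-1) := h3
      _ ≤ d * (d-1) := h4
      _ = 2*k := hk
    calc Bad.card ≤ (Bad1 ∪ Bad2).card := Finset.card_le_card hsub
    _ ≤ Bad1.card + Bad2.card := Finset.card_union_le _ _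
    _ ≤ k + 2*k := Nat.add_le_add hc1 hc2
    _ = 3*k := by ring
  have f5 : T.card = (2*m-1)*(m-1) := by
    obtain ⟨M, rfl⟩ : ∃ M, m = M + 2 := ⟨m - 2, by omega⟩
    have hs : ({0, u} : Finset (Fin n)) ⊆ Finset.univ := Finset.subset_univ _
    have hc2 : ({0, u} : Finset (Fin n)).card = 2 := Finset.card_pair (Ne.symm hu)
    have hcd : ((Finset.univ : Finset (Fin n)) \ {0, u}).card = 2*M + 3 := by
      rw [Finset.card_sdiff_of_subset hs, hc2, Finset.card_univ, Fintype.card_fin]; omega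
    rw [hT, Finset.card_powersetCard, hcd, Nat.choose_two_right]
    have e1 : (2*M+3) * (2*M+3-1) = ((2*(M+2)-1)*((M+2)-1)) * 2 := by
      have : 2*M+3-1 = 2*M+2 := by omega
      rw [this]
      have : 2*(M+2)-1 = 2*M+3 := by omega
      rw [this]
      have : (M+2)-1 = M+1 := by omega
      rw [this]; ring
    rw [e1, Nat.mul_div_cancel _ (by norm_num)]
  have f7 : A.card + B.card = hdeg (HH n m d) u :=
    Finset.card_filter_add_card_filter_not _
  have f8 : hdeg (HH n m d) u = ((HH n m d).filter (fun e => u ∈ e)).card := rfl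
  linarith [f1, f2, f3, f4, f5, f7, hkey]

end Construction

theorem stmt0 (n : ℕ) (hn : 5 ≤ n) (hodd : Odd n) :
    (∃ H : Finset (Finset (Fin n)),
      (∀ e ∈ H, e.card = 3) ∧
      (∀ x : Fin n, (n - 1) / 2 * ⌊dstar n⌋₊ ≤ hdeg H x) ∧
      ∃ x : Fin n, ¬ CovK4m H x) ∧
    (n - 1) / 2 * ⌊dstar n⌋₊ ≤ c1K4m n := by
  obtain ⟨t, ht⟩ := hodd
  have ht2 : 2 ≤ t := by omega
  have hnm : n = 2*t + 1 := by omega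
  haveI : NeZero n := ⟨by omega⟩
  set D := ⌊dstar n⌋₊ with hD
  set N := (n : ℝ) with hN
  have hN5 : (5:ℝ) ≤ N := by rw [hN]; exact_mod_cast hn
  have hΔ0 : (0:ℝ) ≤ 13*N^2 - 72*N + 108 := by nlinarith [sq_nonneg (N-3)]
  set s := Real.sqrt (13*N^2 - 72*N + 108) with hs
  have hs0 : 0 ≤ s := Real.sqrt_nonneg _
  have hs2 : s^2 = 13*N^2 - 72*N + 108 := Real.sq_sqrt hΔ0
  have hsge : N ≤ s := by
    rw [hs]
    rw [show (13*N^2 - 72*N + 108 : ℝ) = N^2 + 12*(N-3)^2 by ring]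
    calc N = Real.sqrt (N^2) := by rw [Real.sqrt_sq (by linarith)]
    _ ≤ _ := Real.sqrt_le_sqrt (by nlinarith [sq_nonneg (N-3)])
  have hds : dstar n = (s - N + 6)/6 := rfl
  have hdstar1 : (1:ℝ) ≤ dstar n := by rw [hds]; linarith
  have hdstar0 : (0:ℝ) ≤ dstar n := by linarith
  have hd1 : 1 ≤ D := Nat.le_floor (by exact_mod_cast hdstar1)
  have hdlef : (D:ℝ) ≤ dstar n := Nat.floor_le hdstar0
  have hdm : D ≤ t := by
    have hslt : s < 4*N - 3 := by
      rw [hs]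
      have h1 : (0:ℝ) < 4*N - 3 := by linarith
      calc Real.sqrt (13*N^2 - 72*N + 108) < Real.sqrt ((4*N-3)^2) :=
        Real.sqrt_lt_sqrt hΔ0 (by nlinarith)
      _ = 4*N - 3 := Real.sqrt_sq (by linarith)
    have : dstar n < (t:ℝ) + 1 := by
      rw [hds]
      have hcast : (N:ℝ) = 2*(t:ℝ) + 1 := by rw [hN]; exact_mod_cast congrArg (Nat.cast : ℕ → ℝ) hnm
      linarith
    have := (Nat.floor_lt hdstar0).2 (by exact_mod_cast this : dstar n < ((t+1 : ℕ) : ℝ))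
    omega
  have hq : 3*(dstar n)^2 + (N-6)*(dstar n) = (N-2)*(N-3) := by
    rw [hds]
    linear_combination (1/12 : ℝ) * hs2
  have hkeyR : 3*(D:ℝ)^2 + (N-6)*(D:ℝ) ≤ (N-2)*(N-3) := by
    have hprod : (0:ℝ) ≤ (dstar n - D) * (3*(dstar n + D) + (N - 6)) := by
      apply mul_nonneg (by linarith)
      have : (0:ℝ) ≤ (D:ℝ) := Nat.cast_nonneg _
      linarith
    nlinarith [hprod, hq]
  have heven : Even (D * (D-1)) := by
    have := Nat.even_mul_succ_self (D-1)
    rw [show D - 1 + 1 = D by omega] at this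
    rwa [mul_comm]
  obtain ⟨k, hk2⟩ := heven
  have hk : D * (D-1) = 2*k := by omega
  have hkeyN : 3*k + t*D ≤ (2*t-1)*(t-1) + D := by
    obtain ⟨M, rfl⟩ : ∃ M, t = M + 2 := ⟨t - 2, by omega⟩
    have e1 : 2*(M+2)-1 = 2*M+3 := by omega
    have e2 : (M+2)-1 = M+1 := by omega
    rw [e1, e2]
    have hcast : N = 2*(M:ℝ)+5 := by
      rw [hN]; rw [hnm]; push_cast; ring
    have hkc : (D:ℝ)*((D:ℝ)-1) = 2*(k:ℝ) := by
      have : ((D * (D-1) : ℕ) : ℝ) = ((2*k : ℕ) : ℝ) := by exact_mod_cast hk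
      push_cast [Nat.cast_sub hd1] at this
      linarith [this]
    have goalR : 3*(k:ℝ) + ((M:ℝ)+2)*(D:ℝ) ≤ (2*(M:ℝ)+3)*((M:ℝ)+1) + (D:ℝ) := by
      rw [hcast] at hkeyR
      nlinarith [hkeyR, hkc]
    have : ((3*k + (M+2)*D : ℕ) : ℝ) ≤ (((2*M+3)*(M+1) + D : ℕ) : ℝ) := by push_cast; linarith
    exact_mod_cast this
  -- the construction
  set H := HH n t D with hH
  have hhalf : (n-1)/2 = t := by omega
  have bullet1 : ∀ e ∈ H, e.card = 3 := fun e he => HH_card3 he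
  have bullet2 : ∀ x : Fin n, (n - 1) / 2 * D ≤ hdeg H x := by
    intro x
    rw [hhalf]
    by_cases hx : x = 0
    · rw [hx]; exact deg_zero hnm ht2 hdm
    · exact deg_other hnm ht2 hd1 hdm hk hkeyN hx
  have bullet3 : ¬ CovK4m H 0 := not_cov (by omega)
  refine ⟨⟨H, bullet1, bullet2, 0, bullet3⟩, ?_⟩
  have hmin : (n-1)/2 * D ≤ minDeg H := by
    rw [minDeg]
    refine le_csInf ⟨hdeg H 0, ⟨0, rfl⟩⟩ ?_
    rintro b ⟨x, rfl⟩
    exact bullet2 x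
  have hmem : minDeg H ∈ {d : ℕ | ∃ H' : Finset (Finset (Fin n)),
      (∀ e ∈ H', e.card = 3) ∧ (∃ x, ¬ CovK4m H' x) ∧ d = minDeg H'} :=
    ⟨H, bullet1, ⟨0, bullet3⟩, rfl⟩
  have hbdd : BddAbove {d : ℕ | ∃ H' : Finset (Finset (Fin n)),
      (∀ e ∈ H', e.card = 3) ∧ (∃ x, ¬ CovK4m H' x) ∧ d = minDeg H'} := by
    refine ⟨Fintype.card (Finset (Fin n)), ?_⟩
    rintro y ⟨H', hH1, hH2, rfl⟩
    have h1 : minDeg H' ≤ hdeg H' 0 := Nat.sInf_le ⟨0, rfl⟩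
    have h2 : hdeg H' 0 ≤ Fintype.card (Finset (Fin n)) := by
      calc (H'.filter (fun e => (0:Fin n) ∈ e)).card ≤ H'.card := Finset.card_filter_le _ _
      _ ≤ (Finset.univ : Finset (Finset (Fin n))).card := Finset.card_le_univ _
      _ = _ := Finset.card_univ
    exact h1.trans h2
  exact hmin.trans (le_csSup hbdd hmem)
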